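/- Let R be an integral domain that is a finitely generated ℂ-algebra, a unique factorization domain, and has Krull dimension 3. Let D : Derivation ℂ R R be a nonzero locally nilpotent derivation (for every r ∈ R there exists n ∈ ℕ with D^[n] r = 0), and let A = ker D = {r ∈ R | D r = 0} be the invariant subalgebra. Then for every maximal ideal m of the ring A, the Krull dimension of the quotient ring R ⧸ (m · R) is at most 1, where m · R denotes the ideal of R generated by the image of m under the inclusion A → R. -/

import Mathlib

open Polynomial Finset

set_option maxHeartbeats 1600000
set_option synthInstance.maxHeartbeats 200000

section DerLemmas

variable {R : Type*} [CommRing R] [Algebra ℂ R]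
variable (D : Derivation ℂ R R)

private lemma iterD_zero_eq (n : ℕ) : (⇑D)^[n] (0 : R) = 0 :=
  Function.iterate_fixed (map_zero D) n

private lemma iterD_mono {x : R} {n m : ℕ} (h : (⇑D)^[n] x = 0) (hnm : n ≤ m) :
    (⇑D)^[m] x = 0 := by
  obtain ⟨k, rfl⟩ := Nat.exists_eq_add_of_le hnm
  rw [Nat.add_comm, Function.iterate_add_apply, h, iterD_zero_eq]

private lemma iterD_mul (n : ℕ) (x y : R) :
    (⇑D)^[n] (x * y) =
      ∑ k ∈ range n.succ, (n.choose k • ((⇑D)^[n - k] x * (⇑D)^[k] y)) := by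
  induction n with
  | zero => simp [Finset.range]
  | succ n IH =>
    calc
      (⇑D)^[n + 1] (x * y) =
          D (∑ k ∈ range n.succ,
              n.choose k • ((⇑D)^[n - k] x * (⇑D)^[k] y)) := by
        rw [Function.iterate_succ_apply', IH]
      _ = (∑ k ∈ range n.succ,
            n.choose k • ((⇑D)^[n - k + 1] x * (⇑D)^[k] y)) +
          ∑ k ∈ range n.succ,
            n.choose k • ((⇑D)^[n - k] x * (⇑D)^[k + 1] y) := by
        rw [map_sum]
        rw [← sum_add_distrib]
        refine sum_congr rfl fun k _ => ?_
        rw [map_nsmul]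
        rw [Derivation.leibniz]
        simp only [smul_eq_mul, Function.iterate_succ_apply', smul_add]
        rw [add_comm]
        congr 1 <;> rw [mul_comm]
      _ = (∑ k ∈ range n.succ,
                n.choose k.succ • ((⇑D)^[n - k] x * (⇑D)^[k + 1] y)) +
              1 • ((⇑D)^[n + 1] x * (⇑D)^[0] y) +
            ∑ k ∈ range n.succ, n.choose k • ((⇑D)^[n - k] x * (⇑D)^[k + 1] y) :=
        ?_
      _ = ((∑ k ∈ range n.succ, n.choose k • ((⇑D)^[n - k] x * (⇑D)^[k + 1] y)) +
              ∑ k ∈ range n.succ,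
                n.choose k.succ • ((⇑D)^[n - k] x * (⇑D)^[k + 1] y)) +
            1 • ((⇑D)^[n + 1] x * (⇑D)^[0] y) := by
        rw [add_comm, add_assoc]
      _ = (∑ i ∈ range n.succ,
              (n + 1).choose (i + 1) • ((⇑D)^[n + 1 - (i + 1)] x * (⇑D)^[i + 1] y)) +
            1 • ((⇑D)^[n + 1] x * (⇑D)^[0] y) := by
        simp_rw [Nat.choose_succ_succ, Nat.succ_sub_succ, add_smul, sum_add_distrib]
      _ = ∑ k ∈ range n.succ.succ,
            n.succ.choose k • ((⇑D)^[n.succ - k] x * (⇑D)^[k] y) := by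
        rw [sum_range_succ' _ n.succ, Nat.choose_zero_right, tsub_zero]
    congr
    refine (sum_range_succ' _ _).trans (congr_arg₂ (· + ·) ?_ ?_)
    · rw [sum_range_succ, Nat.choose_succ_self, zero_smul, add_zero]
      refine sum_congr rfl fun k hk => ?_
      rw [mem_range] at hk
      congr
      omega
    · rw [Nat.choose_zero_right, tsub_zero]

end DerLemmas

section FC

variable {R : Type*} [CommRing R] [IsDomain R] [Algebra ℂ R]
variable {D : Derivation ℂ R R}

private lemma my_charzero : CharZero R :=
  charZero_of_injective_algebraMap (algebraMap ℂ R).injective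

/-- factorial closedness of the kernel of a locally nilpotent derivation -/
private lemma fc (hln : ∀ r : R, ∃ n : ℕ, (⇑D)^[n] r = 0)
    {x y : R} (hxy : x * y ≠ 0) (h : D (x * y) = 0) : D x = 0 := by
  haveI : CharZero R := my_charzero
  by_contra hDx
  have hx : x ≠ 0 := by rintro rfl; exact hDx (map_zero D)
  have hy : y ≠ 0 := fun h0 => hxy (by rw [h0, mul_zero])
  -- least vanishing indices
  have hfx := hln x
  have hfy := hln y
  classical
  let n := Nat.find hfx
  let m := Nat.find hfy
  have hxn : (⇑D)^[n] x = 0 := Nat.find_spec hfx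
  have hym : (⇑D)^[m] y = 0 := Nat.find_spec hfy
  have hn2 : 2 ≤ n := by
    rcases Nat.lt_or_ge n 2 with h' | h'
    · interval_cases n
      · exact absurd hxn hx
      · exact absurd hxn hDx
    · exact h'
  have hm1 : 1 ≤ m := by
    rcases Nat.lt_or_ge m 1 with h' | h'
    · interval_cases m
      · exact absurd hym hy
    · exact h'
  set p := n - 1 with hp
  set s := m - 1 with hs
  have hxp : (⇑D)^[p] x ≠ 0 := Nat.find_min hfx (by omega)
  have hys : (⇑D)^[s] y ≠ 0 := Nat.find_min hfy (by omega)
  -- D^[p+s] (x*y) = 0 since D (x*y) = 0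
  have hzero : (⇑D)^[p + s] (x * y) = 0 := by
    have h1 : p + s = (p + s - 1) + 1 := by omega
    rw [h1, Function.iterate_succ_apply, h, iterD_zero_eq]
  -- but by Leibniz it is a nonzero single term
  have hleib := iterD_mul D (p + s) x y
  rw [hzero] at hleib
  have hsingle : ∑ k ∈ range (p + s).succ,
      ((p + s).choose k • ((⇑D)^[p + s - k] x * (⇑D)^[k] y)) =
      (p + s).choose s • ((⇑D)^[p + s - s] x * (⇑D)^[s] y) := by
    refine @Finset.sum_eq_single_of_mem ℕ R _ (range (p + s).succ)
      (fun k => (p + s).choose k • ((⇑D)^[p + s - k] x * (⇑D)^[k] y)) s ?_ ?_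
    · rw [mem_range]; omega
    · intro k hk hks
      rcases Nat.lt_or_ge k s with h' | h'
      · have h0 : (⇑D)^[p + s - k] x = 0 := iterD_mono D hxn (show n ≤ p + s - k by omega)
        rw [h0, zero_mul, smul_zero]
      · have h0 : (⇑D)^[k] y = 0 := iterD_mono D hym (show m ≤ k by omega)
        rw [h0, mul_zero, smul_zero]
  rw [show p + s - s = p by omega] at hsingle
  rw [hsingle] at hleib
  have hne : (p + s).choose s • ((⇑D)^[p] x * (⇑D)^[s] y) ≠ 0 := by
    rw [nsmul_eq_mul]
    refine mul_ne_zero ?_ (mul_ne_zero hxp hys)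
    exact Nat.cast_ne_zero.mpr (Nat.choose_pos (show s ≤ p + s by omega)).ne'
  exact hne hleib.symm

end FC

section Taylor

variable {R : Type*} [CommRing R] [IsDomain R] [Algebra ℂ R]
variable {D : Derivation ℂ R R} {A : Subalgebra ℂ R}

private lemma exists_preslice (hln : ∀ r : R, ∃ n : ℕ, (⇑D)^[n] r = 0) (hD : D ≠ 0) :
    ∃ r a : R, D r = a ∧ D a = 0 ∧ a ≠ 0 := by
  classical
  have hx : ∃ x : R, D x ≠ 0 := by
    by_contra h
    push_neg at h
    exact hD (by ext x; simpa using h x)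
  obtain ⟨x, hx⟩ := hx
  have hxx : x ≠ 0 := by rintro rfl; exact hx (map_zero D)
  have hfx := hln x
  set n := Nat.find hfx with hn
  have hxn : (⇑D)^[n] x = 0 := Nat.find_spec hfx
  have hn2 : 2 ≤ n := by
    rcases Nat.lt_or_ge n 2 with h' | h'
    · interval_cases n
      · exact absurd hxn hxx
      · exact absurd hxn hx
    · exact h'
  refine ⟨(⇑D)^[n-2] x, (⇑D)^[n-1] x, ?_, ?_, Nat.find_min hfx (by omega)⟩
  · have h1 : (⇑D)^[n-1] x = D ((⇑D)^[n-2] x) := by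
      conv_lhs => rw [show n - 1 = (n-2) + 1 by omega]
      rw [Function.iterate_succ_apply']
    exact h1.symm
  · have h1 : (⇑D)^[n] x = D ((⇑D)^[n-1] x) := by
      conv_lhs => rw [show n = (n-1) + 1 by omega]
      rw [Function.iterate_succ_apply']
    rw [← h1]; exact hxn

private lemma taylor_exp (hA : ∀ r : R, r ∈ A ↔ D r = 0)
    {r a : R} (hr : D r = a) (ha : D a = 0)
    (hln : ∀ r : R, ∃ n : ℕ, (⇑D)^[n] r = 0) :
    ∀ x : R, ∃ (n : ℕ) (F : Polynomial ↥A), a ^ n * x = Polynomial.aeval r F := by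
  suffices H : ∀ (N : ℕ) (x : R), (⇑D)^[N] x = 0 →
      ∃ (n : ℕ) (F : Polynomial ↥A), a ^ n * x = Polynomial.aeval r F by
    intro x; obtain ⟨N, hN⟩ := hln x; exact H N x hN
  intro N
  induction N with
  | zero =>
    intro x hx
    simp only [Function.iterate_zero, id_eq] at hx
    exact ⟨0, 0, by simp [hx]⟩
  | succ N IH =>
    intro x hx
    obtain ⟨M, G, hG⟩ := IH (D x) (by rw [← Function.iterate_succ_apply]; exact hx)
    set z : R := ∑ k ∈ Finset.range (G.natDegree + 1),
        ((((k+1 : ℕ) : ℂ))⁻¹ • (G.coeff k : R)) * r ^ (k+1) with hz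
    have hterm : ∀ k : ℕ,
        D (((((k+1 : ℕ) : ℂ))⁻¹ • (G.coeff k : R)) * r ^ (k+1)) =
          (G.coeff k : R) * r ^ k * a := by
      intro k
      have hc : D ((G.coeff k : R)) = 0 := (hA _).mp (SetLike.coe_mem _)
      rw [Derivation.leibniz, Derivation.leibniz_pow, hr, Derivation.map_smul, hc, smul_zero,
        smul_zero, add_zero]
      have h1 : (k + 1) • (r ^ (k + 1 - 1) • a) = (((k+1:ℕ):R)) * (r ^ k * a) := by
        rw [Nat.add_sub_cancel, nsmul_eq_mul, smul_eq_mul]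
      rw [smul_eq_mul, h1]
      have hne : (((k+1:ℕ):ℂ)) ≠ 0 := by exact_mod_cast Nat.succ_ne_zero k
      have h2 : (((k+1:ℕ):R)) * (r ^ k * a) = (((k+1:ℕ):ℂ)) • (r ^ k * a) := by
        rw [Nat.cast_smul_eq_nsmul, nsmul_eq_mul]
      rw [h2, smul_mul_assoc, mul_smul_comm, smul_smul, inv_mul_cancel₀ hne, one_smul, mul_assoc]
    have haevalG : Polynomial.aeval r G = ∑ k ∈ Finset.range (G.natDegree + 1),
        (G.coeff k : R) * r ^ k := by
      rw [Polynomial.aeval_eq_sum_range]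
      refine Finset.sum_congr rfl fun k _ => ?_
      rw [Algebra.smul_def]; rfl
    have hDz : D z = a * Polynomial.aeval r G := by
      rw [hz, map_sum]
      rw [haevalG, Finset.mul_sum]
      refine Finset.sum_congr rfl fun k _ => ?_
      rw [hterm k]; ring
    have hDax : D (a ^ (M+1) * x) = a * Polynomial.aeval r G := by
      have h2 : D (a ^ (M+1)) = 0 := by rw [Derivation.leibniz_pow, ha]; simp
      rw [Derivation.leibniz, h2, smul_zero, add_zero, smul_eq_mul]
      rw [pow_succ, ← hG]; ring
    have hker : (a ^ (M+1) * x - z) ∈ A := by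
      rw [hA, map_sub, hDz, hDax, sub_self]
    refine ⟨M+1, Polynomial.C (⟨a ^ (M+1) * x - z, hker⟩ : ↥A) +
      ∑ k ∈ Finset.range (G.natDegree + 1),
        Polynomial.C ((((k+1 : ℕ) : ℂ))⁻¹ • G.coeff k) * Polynomial.X ^ (k+1), ?_⟩
    simp only [map_add, map_sum, map_mul, map_pow, Polynomial.aeval_C, Polynomial.aeval_X]
    have hco : ∀ k : ℕ,
        (algebraMap ↥A R) ((((k+1 : ℕ) : ℂ))⁻¹ • G.coeff k) =
          ((((k+1 : ℕ) : ℂ))⁻¹ • (G.coeff k : R)) := by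
      intro k; rfl
    rw [Finset.sum_congr rfl fun k _ => by rw [hco k]]
    show a ^ (M + 1) * x = (↑(⟨a ^ (M+1) * x - z, hker⟩ : ↥A) : R) + z
    simp
end Taylor

section Perron

variable {K : Type*} [Field K]

private lemma perron (F G : Polynomial K) :
    ∃ (N : ℕ) (γ : Fin N × Fin N → K),
      (∃ p, γ p ≠ 0) ∧
      ∑ p : Fin N × Fin N, γ p • (F ^ (p.1 : ℕ) * G ^ (p.2 : ℕ)) = 0 := by
  classical
  set d : ℕ := max F.natDegree G.natDegree + 1 with hd
  set N : ℕ := 2 * d + 1 with hN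
  set M : ℕ := 2 * d * N with hM
  have hmem : ∀ p : Fin N × Fin N, F ^ (p.1 : ℕ) * G ^ (p.2 : ℕ) ∈ degreeLT K M := by
    intro p
    rw [Polynomial.mem_degreeLT]
    rcases eq_or_ne (F ^ (p.1 : ℕ) * G ^ (p.2 : ℕ)) 0 with h0 | h0
    · rw [h0, Polynomial.degree_zero]
      exact WithBot.bot_lt_coe _
    · rw [Polynomial.degree_eq_natDegree h0]
      have h2 : (F ^ (p.1 : ℕ) * G ^ (p.2 : ℕ)).natDegree ≤
          (F ^ (p.1 : ℕ)).natDegree + (G ^ (p.2 : ℕ)).natDegree :=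
        Polynomial.natDegree_mul_le
      have h3 : (F ^ (p.1 : ℕ)).natDegree ≤ (p.1 : ℕ) * F.natDegree :=
        Polynomial.natDegree_pow_le
      have h4 : (G ^ (p.2 : ℕ)).natDegree ≤ (p.2 : ℕ) * G.natDegree :=
        Polynomial.natDegree_pow_le
      have h5 : (p.1 : ℕ) * F.natDegree ≤ (N - 1) * (d - 1) :=
        Nat.mul_le_mul (by omega) (by omega)
      have h6 : (p.2 : ℕ) * G.natDegree ≤ (N - 1) * (d - 1) :=
        Nat.mul_le_mul (by omega) (by omega)
      have h7 : (N - 1) * (d - 1) + (N - 1) * (d - 1) < M := by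
        have hd1 : 1 ≤ d := by omega
        have hN1 : 1 ≤ N := by omega
        calc (N - 1) * (d - 1) + (N - 1) * (d - 1) ≤ N * (d-1) + N * (d-1) := by
              exact Nat.add_le_add (Nat.mul_le_mul_right _ (by omega))
                (Nat.mul_le_mul_right _ (by omega))
          _ < 2 * d * N := by
              have : N * (d - 1) + N * (d - 1) = 2 * (d-1) * N := by ring
              rw [this]
              have : 2 * (d - 1) < 2 * d := by omega
              exact Nat.mul_lt_mul_of_lt_of_le this le_rfl (by omega)
      have h1 : (F ^ (p.1 : ℕ) * G ^ (p.2 : ℕ)).natDegree < M := by omega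
      exact_mod_cast WithBot.coe_lt_coe.mpr h1
  set v : Fin N × Fin N → degreeLT K M :=
    fun p => ⟨F ^ (p.1 : ℕ) * G ^ (p.2 : ℕ), hmem p⟩ with hv
  haveI : Module.Finite K (degreeLT K M) :=
    Module.Finite.equiv (Polynomial.degreeLTEquiv K M).symm
  have hnli : ¬ LinearIndependent K v := by
    intro hli
    have hcard := hli.fintype_card_le_finrank
    rw [Fintype.card_prod, Fintype.card_fin] at hcard
    have hfr : Module.finrank K (degreeLT K M) = M := by
      rw [(Polynomial.degreeLTEquiv K M).finrank_eq]
      simp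
    rw [hfr] at hcard
    -- N * N ≤ M = 2 d N but N = 2d+1 > 2d
    have : 2 * d * N < N * N := by
      have : 2 * d < N := by omega
      exact Nat.mul_lt_mul_of_lt_of_le this le_rfl (by omega)
    omega
  obtain ⟨γ, hsum, p₀, hp₀⟩ := Fintype.not_linearIndependent_iff.mp hnli
  refine ⟨N, γ, ⟨p₀, hp₀⟩, ?_⟩
  have := congrArg (Subtype.val) hsum
  simpa [hv] using this

end Perron

section ChainLemmas

variable {R : Type*} [CommRing R]

private lemma eval_mem_of_coeff_mem {Q : Ideal R} {w : Polynomial R} (f : R)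
    (h : ∀ k, w.coeff k ∈ Q) : w.eval f ∈ Q := by
  rw [Polynomial.eval_eq_sum_range]
  exact Ideal.sum_mem _ fun k _ => Ideal.mul_mem_right _ _ (h k)

private lemma onevar {Q P₁ P₂ : Ideal R} (hP₁ : P₁.IsPrime)
    (hQ1 : Q ≤ P₁) (h12 : P₁ ≤ P₂) {f : R} (hf2 : f ∈ P₂) (hf1 : f ∉ P₁)
    (Aset : Set R) (hmQ : ∀ z : R, z ∈ Aset → z ∈ P₂ → z ∈ Q) :
    ∀ (n : ℕ) (w : Polynomial R), w.natDegree ≤ n → (∀ k, w.coeff k ∈ Aset) →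
      w.eval f ∈ P₁ → ∀ k, w.coeff k ∈ Q := by
  intro n
  induction n with
  | zero =>
    intro w hw hcoeff heval k
    rcases Nat.eq_zero_or_pos k with rfl | hk
    · have h0 : w.eval f = w.coeff 0 := by
        have : w = Polynomial.C (w.coeff 0) := (Polynomial.eq_C_of_natDegree_le_zero hw)
        rw [this]; simp
      exact hmQ _ (hcoeff 0) (h12 (h0 ▸ heval))
    · rw [Polynomial.coeff_eq_zero_of_natDegree_lt (by omega)]
      exact Ideal.zero_mem _
  | succ n IH =>
    intro w hw hcoeff heval k
    have heq : f * (w.divX.eval f) + w.coeff 0 = w.eval f := by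
      have h' := congrArg (Polynomial.eval f) (Polynomial.X_mul_divX_add w)
      simp only [Polynomial.eval_add, Polynomial.eval_mul, Polynomial.eval_X,
        Polynomial.eval_C] at h'
      exact h'
    have hc0P2 : w.coeff 0 ∈ P₂ := by
      have : w.coeff 0 = w.eval f - f * (w.divX.eval f) := by rw [← heq]; ring
      rw [this]
      exact Ideal.sub_mem _ (h12 heval) (Ideal.mul_mem_right _ _ hf2)
    have hc0Q : w.coeff 0 ∈ Q := hmQ _ (hcoeff 0) hc0P2
    have hdivP1 : w.divX.eval f ∈ P₁ := by
      have hmul : f * (w.divX.eval f) ∈ P₁ := by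
        have : f * (w.divX.eval f) = w.eval f - w.coeff 0 := by rw [← heq]; ring
        rw [this]
        exact Ideal.sub_mem _ heval (hQ1 hc0Q)
      exact (hP₁.mem_or_mem hmul).resolve_left hf1
    have hdiv := IH w.divX
      (by rw [Polynomial.natDegree_divX_eq_natDegree_tsub_one]; omega)
      (fun k => by rw [Polynomial.coeff_divX]; exact hcoeff _) hdivP1
    rcases Nat.eq_zero_or_pos k with rfl | hk
    · exact hc0Q
    · obtain ⟨k, rfl⟩ := Nat.exists_eq_add_of_le hk
      rw [Nat.add_comm]
      rw [← Polynomial.coeff_divX]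
      exact hdiv k

private noncomputable def evfg (f g : R) : Polynomial (Polynomial R) →+* R :=
  (Polynomial.evalRingHom g).comp (Polynomial.mapRingHom (Polynomial.evalRingHom f))

private lemma evfg_C (f g : R) (w : Polynomial R) : evfg f g (Polynomial.C w) = w.eval f := by
  simp [evfg]

private lemma evfg_X (f g : R) : evfg f g Polynomial.X = g := by
  simp [evfg]

private lemma twovar {Q P₁ P₂ : Ideal R} (hQ : Q.IsPrime) (hP₁ : P₁.IsPrime)
    (hQ1 : Q ≤ P₁) (h12 : P₁ ≤ P₂) {f g : R} (hf2 : f ∈ P₂) (hf1 : f ∉ P₁)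
    (hg1 : g ∈ P₁) (hgQ : g ∉ Q)
    (Aset : Set R) (hmQ : ∀ z : R, z ∈ Aset → z ∈ P₂ → z ∈ Q) :
    ∀ (n : ℕ) (W : Polynomial (Polynomial R)), W.natDegree ≤ n →
      (∀ j k, (W.coeff j).coeff k ∈ Aset) →
      evfg f g W ∈ Q → ∀ j k, (W.coeff j).coeff k ∈ Q := by
  intro n
  induction n with
  | zero =>
    intro W hW hcoeff heval j k
    rcases Nat.eq_zero_or_pos j with rfl | hj
    · have h0 : evfg f g W = (W.coeff 0).eval f := by
        have : W = Polynomial.C (W.coeff 0) := (Polynomial.eq_C_of_natDegree_le_zero hW)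
        conv_lhs => rw [this]
        exact evfg_C f g _
      exact onevar hP₁ hQ1 h12 hf2 hf1 Aset hmQ (W.coeff 0).natDegree _ le_rfl
        (hcoeff 0) (hQ1 (h0 ▸ heval)) k
    · rw [show W.coeff j = 0 from Polynomial.coeff_eq_zero_of_natDegree_lt (by omega)]
      simp only [Polynomial.coeff_zero]
      exact Ideal.zero_mem _
  | succ n IH =>
    intro W hW hcoeff heval j k
    have heq : g * (evfg f g W.divX) + (W.coeff 0).eval f = evfg f g W := by
      conv_rhs => rw [← Polynomial.X_mul_divX_add W]
      rw [map_add, map_mul, evfg_X, evfg_C]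
    have hc0P1 : (W.coeff 0).eval f ∈ P₁ := by
      have : (W.coeff 0).eval f = evfg f g W - g * (evfg f g W.divX) := by rw [← heq]; ring
      rw [this]
      exact Ideal.sub_mem _ (hQ1 heval) (Ideal.mul_mem_right _ _ hg1)
    have hc0Q : ∀ k, (W.coeff 0).coeff k ∈ Q :=
      onevar hP₁ hQ1 h12 hf2 hf1 Aset hmQ (W.coeff 0).natDegree _ le_rfl (hcoeff 0) hc0P1
    have hdivQmemP : evfg f g W.divX ∈ Q := by
      have hmul : g * (evfg f g W.divX) ∈ Q := by
        have : g * (evfg f g W.divX) = evfg f g W - (W.coeff 0).eval f := by rw [← heq]; ring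
        rw [this]
        exact Ideal.sub_mem _ heval (eval_mem_of_coeff_mem f hc0Q)
      exact (hQ.mem_or_mem hmul).resolve_left hgQ
    have hdiv := IH W.divX
      (by rw [Polynomial.natDegree_divX_eq_natDegree_tsub_one]; omega)
      (fun j k => by rw [Polynomial.coeff_divX]; exact hcoeff _ _) hdivQmemP
    rcases Nat.eq_zero_or_pos j with rfl | hj
    · exact hc0Q k
    · obtain ⟨j, rfl⟩ := Nat.exists_eq_add_of_le hj
      rw [Nat.add_comm, ← Polynomial.coeff_divX]
      exact hdiv j k

end ChainLemmas

section Family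

variable {R : Type*} [CommRing R] [Algebra ℂ R]

private lemma family_mem {Q P₁ P₂ : Ideal R} (hQ : Q.IsPrime) (hP₁ : P₁.IsPrime)
    (hQ1 : Q ≤ P₁) (h12 : P₁ ≤ P₂) {f g : R} (hf2 : f ∈ P₂) (hf1 : f ∉ P₁)
    (hg1 : g ∈ P₁) (hgQ : g ∉ Q)
    (A : Subalgebra ℂ R) (hmQ : ∀ z : R, z ∈ A → z ∈ P₂ → z ∈ Q)
    {N : ℕ} (d : Fin N × Fin N → R) (hd : ∀ p, d p ∈ A)
    (hsum : ∑ p : Fin N × Fin N, d p * f ^ (p.1 : ℕ) * g ^ (p.2 : ℕ) ∈ Q) :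
    ∀ p, d p ∈ Q := by
  classical
  set W : Polynomial (Polynomial R) := ∑ p : Fin N × Fin N,
    Polynomial.monomial (p.2 : ℕ) (Polynomial.monomial (p.1 : ℕ) (d p)) with hW
  have hWc : ∀ j k : ℕ, (W.coeff j).coeff k =
      ∑ p : Fin N × Fin N, if (p.2 : ℕ) = j ∧ (p.1 : ℕ) = k then d p else 0 := by
    intro j k
    rw [hW, Polynomial.finset_sum_coeff]
    have h1 : ∀ p : Fin N × Fin N,
        ((Polynomial.monomial (p.2 : ℕ) (Polynomial.monomial (p.1 : ℕ) (d p))).coeff j).coeff k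
        = if (p.2 : ℕ) = j ∧ (p.1 : ℕ) = k then d p else 0 := by
      intro p
      rw [Polynomial.coeff_monomial]
      rw [apply_ite (fun (w : Polynomial R) => w.coeff k)]
      rw [Polynomial.coeff_monomial, Polynomial.coeff_zero]
      rw [ite_and]
    rw [Polynomial.finset_sum_coeff] at *
    exact Finset.sum_congr rfl fun p _ => h1 p
  have hval : evfg f g W = ∑ p : Fin N × Fin N, d p * f ^ (p.1 : ℕ) * g ^ (p.2 : ℕ) := by
    rw [hW, map_sum]
    refine Finset.sum_congr rfl fun p _ => ?_
    show (Polynomial.evalRingHom g)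
      ((Polynomial.mapRingHom (Polynomial.evalRingHom f))
        (Polynomial.monomial (p.2:ℕ) (Polynomial.monomial (p.1:ℕ) (d p)))) = _
    simp only [Polynomial.coe_mapRingHom, Polynomial.map_monomial, Polynomial.coe_evalRingHom,
      Polynomial.eval_monomial]
  have hcoeffA : ∀ j k, (W.coeff j).coeff k ∈ (A : Set R) := by
    intro j k
    rw [hWc]
    refine Subalgebra.sum_mem A fun p _ => ?_
    split
    · exact hd p
    · exact A.zero_mem
  have hall := twovar hQ hP₁ hQ1 h12 hf2 hf1 hg1 hgQ (A : Set R) hmQ W.natDegree W le_rfl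
    hcoeffA (by rw [hval]; exact hsum)
  intro p
  have hrec : (W.coeff (p.2 : ℕ)).coeff (p.1 : ℕ) = d p := by
    rw [hWc]
    refine Finset.sum_eq_single_of_mem p (Finset.mem_univ p) ?_ |>.trans (by simp)
    intro p' _ hne
    have : ¬ ((p'.2 : ℕ) = (p.2 : ℕ) ∧ (p'.1 : ℕ) = (p.1 : ℕ)) := by
      rintro ⟨h2, h1⟩
      exact hne (Prod.ext (Fin.ext h1) (Fin.ext h2))
    rw [if_neg this]
  rw [← hrec]
  exact hall _ _

end Family

section Descent

variable {R : Type*} [CommRing R] [IsDomain R] [Algebra ℂ R]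

private lemma descent {D : Derivation ℂ R R} {A : Subalgebra ℂ R}
    (hA : ∀ r : R, r ∈ A ↔ D r = 0)
    {q : R} (hq0 : q ≠ 0) (hqA : q ∈ A)
    {N : ℕ} {f g : R}
    (CC : ∀ d : Fin N × Fin N → R, (∀ p, d p ∈ A) →
      (∑ p : Fin N × Fin N, d p * f ^ (p.1 : ℕ) * g ^ (p.2 : ℕ)) = 0 →
      ∀ p, d p ∈ Ideal.span {q})
    (p₀ : Fin N × Fin N) :
    ∀ (n : ℕ) (d : Fin N × Fin N → R), (∀ p, d p ∈ A) →
      (∑ p : Fin N × Fin N, d p * f ^ (p.1 : ℕ) * g ^ (p.2 : ℕ)) = 0 →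
      ∀ e : R, ¬ q ∣ e → d p₀ = q ^ n * e → False := by
  intro n
  induction n with
  | zero =>
    intro d hdA hsum e he hde
    have hm := CC d hdA hsum p₀
    rw [Ideal.mem_span_singleton, hde, pow_zero, one_mul] at hm
    exact he hm
  | succ n IH =>
    intro d hdA hsum e he hde
    have hmem := CC d hdA hsum
    have hdiv : ∀ p, ∃ y : R, d p = q * y ∧ y ∈ A := by
      intro p
      obtain ⟨y, hy⟩ := Ideal.mem_span_singleton.mp (hmem p)
      refine ⟨y, hy, ?_⟩
      rw [hA]
      have h0 : D (d p) = 0 := (hA _).mp (hdA p)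
      have hq' : D q = 0 := (hA _).mp hqA
      rw [hy, Derivation.leibniz, hq', smul_zero, add_zero, smul_eq_mul] at h0
      exact (mul_eq_zero.mp h0).resolve_left hq0
    choose d' hd'eq hd'A using hdiv
    refine IH d' hd'A ?_ e he ?_
    · have h1 : ∑ p : Fin N × Fin N, d p * f ^ (p.1 : ℕ) * g ^ (p.2 : ℕ) =
          q * ∑ p : Fin N × Fin N, d' p * f ^ (p.1 : ℕ) * g ^ (p.2 : ℕ) := by
        rw [Finset.mul_sum]
        refine Finset.sum_congr rfl fun p _ => ?_
        rw [hd'eq p]; ring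
      rw [h1] at hsum
      exact (mul_eq_zero.mp hsum).resolve_left hq0
    · have h1 : q * d' p₀ = q * (q ^ n * e) := by
        rw [← hd'eq p₀, hde]; ring
      exact mul_left_cancel₀ hq0 h1

end Descent

section Main

private lemma four_chain {R : Type*} [CommRing R] [IsDomain R]
    (hdim3 : ringKrullDim R ≤ 3)
    {Q P₀ P₁ P₂ : Ideal R} (hQp : Q.IsPrime) (h0 : P₀.IsPrime) (h1 : P₁.IsPrime)
    (h2 : P₂.IsPrime) (hbQ : ⊥ < Q) (hQ0 : Q < P₀) (l01 : P₀ < P₁) (l12 : P₁ < P₂) :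
    False := by
  haveI : (⊥ : Ideal R).IsPrime := Ideal.bot_prime
  let c : LTSeries (PrimeSpectrum R) :=
    (((((RelSeries.singleton (α := PrimeSpectrum R) {(a, b) : PrimeSpectrum R × PrimeSpectrum R | a < b} ⟨P₂, h2⟩).cons ⟨P₁, h1⟩
      ((PrimeSpectrum.asIdeal_lt_asIdeal _ _).mp l12)).cons ⟨P₀, h0⟩
      ((PrimeSpectrum.asIdeal_lt_asIdeal _ _).mp l01)).cons ⟨Q, hQp⟩
      ((PrimeSpectrum.asIdeal_lt_asIdeal _ _).mp hQ0)).cons ⟨⊥, Ideal.bot_prime⟩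
      ((PrimeSpectrum.asIdeal_lt_asIdeal _ _).mp hbQ))
  have hlen : c.length = 4 := rfl
  have h4 := Order.LTSeries.length_le_krullDim c
  rw [hlen] at h4
  have h5 : (4 : WithBot (WithTop ℕ)) ≤ 3 := le_trans h4 hdim3
  norm_num at h5

private lemma shared_contra
    (R : Type*) [CommRing R] [IsDomain R] [Algebra ℂ R] [UniqueFactorizationMonoid R]
    (D : Derivation ℂ R R) (hD : D ≠ 0)
    (hln : ∀ r : R, ∃ n : ℕ, (⇑D)^[n] r = 0)
    (A : Subalgebra ℂ R) (hA : ∀ r : R, r ∈ A ↔ D r = 0)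
    (m : Ideal ↥A) (hm : m.IsMaximal)
    (P₀ P₁ P₂ : Ideal R) (h0 : P₀.IsPrime) (h1 : P₁.IsPrime) (h2 : P₂.IsPrime)
    (l01 : P₀ < P₁) (l12 : P₁ < P₂)
    (hJ : Ideal.map (algebraMap ↥A R) m ≤ P₀)
    (hmain : (∃ q : R, Prime q ∧ q ∈ A ∧ Ideal.span {q} = P₀) ∨ m = ⊥) :
    False := by
  classical
  -- the contraction of P₂ to A is m
  have hcom : Ideal.comap (algebraMap ↥A R) P₂ = m := by
    refine (hm.eq_of_le (Ideal.comap_ne_top _ h2.ne_top) ?_).symm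
    intro β hβ
    have : algebraMap ↥A R β ∈ Ideal.map (algebraMap ↥A R) m := Ideal.mem_map_of_mem _ hβ
    exact Ideal.mem_comap.mpr (le_of_lt l12 (le_of_lt l01 (hJ this)))
  have hmQ : ∀ z : R, z ∈ A → z ∈ P₂ → z ∈ P₀ := by
    intro z hzA hzP2
    have h1' : (⟨z, hzA⟩ : ↥A) ∈ Ideal.comap (algebraMap ↥A R) P₂ := Ideal.mem_comap.mpr hzP2
    rw [hcom] at h1'
    have h2' : algebraMap ↥A R ⟨z, hzA⟩ ∈ Ideal.map (algebraMap ↥A R) m :=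
      Ideal.mem_map_of_mem _ h1'
    exact hJ h2'
  -- preslice
  obtain ⟨r, a, hr, ha, ha0⟩ := exists_preslice hln hD
  have haA : a ∈ A := (hA a).mpr ha
  -- f and g
  obtain ⟨f, hf2, hf1⟩ := SetLike.exists_of_lt l12
  obtain ⟨g, hg1, hg0⟩ := SetLike.exists_of_lt l01
  -- Taylor expansions
  obtain ⟨Nf, Fp, hFp⟩ := taylor_exp hA hr ha hln f
  obtain ⟨Ng, Gp, hGp⟩ := taylor_exp hA hr ha hln g
  -- Perron relation over the fraction field of A
  set K := FractionRing ↥A with hK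
  obtain ⟨N, γ, ⟨pnz, hpnz⟩, hrel⟩ :=
    perron (Fp.map (algebraMap ↥A K)) (Gp.map (algebraMap ↥A K))
  -- clear denominators
  obtain ⟨b, hb⟩ := IsLocalization.exist_integer_multiples (nonZeroDivisors ↥A) Finset.univ γ
  have hc : ∀ p : Fin N × Fin N, ∃ cp : ↥A,
      algebraMap ↥A K cp = (b : ↥A) • γ p := by
    intro p
    obtain ⟨cp, hcp⟩ := hb p (Finset.mem_univ p)
    exact ⟨cp, hcp⟩
  choose c hcspec using hc
  have hbne : algebraMap ↥A K (b : ↥A) ≠ 0 := by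
    have : ((b : ↥A) : ↥A) ≠ 0 := nonZeroDivisors.coe_ne_zero b
    exact fun h => this (IsFractionRing.injective ↥A K (by rw [h, map_zero]))
  have hcnz : c pnz ≠ 0 := by
    intro h0'
    have := hcspec pnz
    rw [h0', map_zero, Algebra.smul_def] at this
    exact hpnz ((mul_eq_zero.mp this.symm).resolve_left hbne)
  -- the relation over A
  set LA : Polynomial ↥A := ∑ p : Fin N × Fin N,
    Polynomial.C (c p) * (Fp ^ (p.1 : ℕ) * Gp ^ (p.2 : ℕ)) with hLA
  have hLA0 : LA = 0 := by
    apply Polynomial.map_injective (algebraMap ↥A K) (IsFractionRing.injective ↥A K)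
    rw [Polynomial.map_zero]
    have hmap : LA.map (algebraMap ↥A K) = ∑ p : Fin N × Fin N,
        Polynomial.C (algebraMap ↥A K (c p)) *
          ((Fp.map (algebraMap ↥A K)) ^ (p.1 : ℕ) * (Gp.map (algebraMap ↥A K)) ^ (p.2 : ℕ)) := by
      rw [hLA, Polynomial.map_sum]
      refine Finset.sum_congr rfl fun p _ => ?_
      rw [Polynomial.map_mul, Polynomial.map_C, Polynomial.map_mul, Polynomial.map_pow,
        Polynomial.map_pow]
    rw [hmap]
    have : ∀ p : Fin N × Fin N,
        Polynomial.C (algebraMap ↥A K (c p)) *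
          ((Fp.map (algebraMap ↥A K)) ^ (p.1 : ℕ) * (Gp.map (algebraMap ↥A K)) ^ (p.2 : ℕ)) =
        Polynomial.C (algebraMap ↥A K (b : ↥A)) *
          (γ p • ((Fp.map (algebraMap ↥A K)) ^ (p.1 : ℕ) *
            (Gp.map (algebraMap ↥A K)) ^ (p.2 : ℕ))) := by
      intro p
      rw [Polynomial.smul_eq_C_mul, hcspec p, Algebra.smul_def, map_mul]
      ring
    rw [Finset.sum_congr rfl fun p _ => this p, ← Finset.mul_sum, hrel, mul_zero]
  -- evaluate at r
  have heval : ∑ p : Fin N × Fin N,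
      ((c p : R) * ((a ^ Nf * f) ^ (p.1 : ℕ) * (a ^ Ng * g) ^ (p.2 : ℕ))) = 0 := by
    have := congrArg (Polynomial.aeval r) (congrArg (Polynomial.map (algebraMap ↥A R)) hLA0)
    rw [Polynomial.map_zero, map_zero, hLA] at this
    rw [Polynomial.map_sum, map_sum] at this
    rw [← this]
    refine Finset.sum_congr rfl fun p _ => ?_
    rw [Polynomial.map_mul, Polynomial.map_C, Polynomial.map_mul, Polynomial.map_pow,
      Polynomial.map_pow, map_mul, Polynomial.aeval_C, map_mul, map_pow, map_pow]
    have hFev : Polynomial.aeval r (Fp.map (algebraMap ↥A R)) = a ^ Nf * f := by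
      rw [Polynomial.aeval_map_algebraMap]; exact hFp.symm
    have hGev : Polynomial.aeval r (Gp.map (algebraMap ↥A R)) = a ^ Ng * g := by
      rw [Polynomial.aeval_map_algebraMap]; exact hGp.symm
    rw [hFev, hGev]
    rfl
  -- massage into standard family form
  set d : Fin N × Fin N → R :=
    fun p => (c p : R) * a ^ (Nf * (p.1 : ℕ) + Ng * (p.2 : ℕ)) with hdd
  have hsum0 : ∑ p : Fin N × Fin N, d p * f ^ (p.1 : ℕ) * g ^ (p.2 : ℕ) = 0 := by
    rw [← heval]
    refine Finset.sum_congr rfl fun p _ => ?_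
    simp only [hdd]
    rw [mul_pow, mul_pow, ← pow_mul, ← pow_mul, pow_add]
    ring
  have hdA : ∀ p, d p ∈ A := fun p => A.mul_mem (c p).2 (A.pow_mem haA _)
  have hdnz : d pnz ≠ 0 := by
    rw [hdd]
    exact mul_ne_zero (fun h => hcnz (Subtype.ext h)) (pow_ne_zero _ ha0)
  have hfam := family_mem h0 h1 (le_of_lt l01) (le_of_lt l12) hf2 hf1 hg1 hg0 A hmQ d hdA
    (by rw [hsum0]; exact Ideal.zero_mem _)
  rcases hmain with ⟨q, hq, hqA, hspan⟩ | hm0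
  · -- descent case
    obtain ⟨n, e, hne, heq⟩ := WfDvdMonoid.max_power_factor hdnz hq.irreducible
    have CC : ∀ d' : Fin N × Fin N → R, (∀ p, d' p ∈ A) →
        (∑ p : Fin N × Fin N, d' p * f ^ (p.1 : ℕ) * g ^ (p.2 : ℕ)) = 0 →
        ∀ p, d' p ∈ Ideal.span {q} := by
      intro d' hd'A hd'sum
      rw [hspan]
      exact family_mem h0 h1 (le_of_lt l01) (le_of_lt l12) hf2 hf1 hg1 hg0 A hmQ d' hd'A
        (by rw [hd'sum]; exact Ideal.zero_mem _)
    exact descent hA hq.ne_zero hqA CC pnz n d hdA hsum0 e hne heq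
  · -- m = ⊥ case
    have h1' : (⟨d pnz, hdA pnz⟩ : ↥A) ∈ Ideal.comap (algebraMap ↥A R) P₂ :=
      Ideal.mem_comap.mpr (le_of_lt l12 (le_of_lt l01 (hfam pnz)))
    rw [hcom, hm0] at h1'
    have : d pnz = 0 := by
      have := (Ideal.mem_bot).mp h1'
      exact congrArg Subtype.val this
    exact hdnz this

end Main

section Assemble

private lemma prime_factor_in {R : Type*} [CommRing R] [IsDomain R]
    [UniqueFactorizationMonoid R]
    {P : Ideal R} (hP : P.IsPrime) {x : R} (hx : x ∈ P) (hx0 : x ≠ 0) :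
    ∃ q : R, Prime q ∧ q ∈ P ∧ q ∣ x := by
  obtain ⟨fs, hfs, hassoc⟩ := UniqueFactorizationMonoid.exists_prime_factors x hx0
  have hprod : fs.prod ∈ P := by
    obtain ⟨u, hu⟩ := hassoc
    have h1 : fs.prod = x * ↑u⁻¹ := by rw [← hu, mul_assoc]; simp
    rw [h1]; exact Ideal.mul_mem_right _ _ hx
  obtain ⟨q, hqfs, hqP⟩ := (hP.multiset_prod_mem_iff_exists_mem fs).mp hprod
  exact ⟨q, hfs q hqfs, hqP, (Multiset.dvd_prod hqfs).trans hassoc.dvd⟩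

private lemma no_chain
    (R : Type*) [CommRing R] [IsDomain R] [Algebra ℂ R] [UniqueFactorizationMonoid R]
    (hdim3 : ringKrullDim R ≤ 3)
    (D : Derivation ℂ R R) (hD : D ≠ 0)
    (hln : ∀ r : R, ∃ n : ℕ, (⇑D)^[n] r = 0)
    (A : Subalgebra ℂ R) (hA : ∀ r : R, r ∈ A ↔ D r = 0)
    (m : Ideal ↥A) (hm : m.IsMaximal)
    (P₀ P₁ P₂ : Ideal R) (h0 : P₀.IsPrime) (h1 : P₁.IsPrime) (h2 : P₂.IsPrime)
    (l01 : P₀ < P₁) (l12 : P₁ < P₂)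
    (hJ : Ideal.map (algebraMap ↥A R) m ≤ P₀) : False := by
  classical
  by_cases hm0 : m = ⊥
  · by_cases hP0 : P₀ = ⊥
    · exact shared_contra R D hD hln A hA m hm P₀ P₁ P₂ h0 h1 h2 l01 l12 hJ (Or.inr hm0)
    · obtain ⟨x, hxP0, hx0⟩ := Submodule.exists_mem_ne_zero_of_ne_bot hP0
      obtain ⟨q, hq, hqP, -⟩ := prime_factor_in h0 hxP0 hx0
      have hle : Ideal.span {q} ≤ P₀ := (Ideal.span_singleton_le_iff_mem _).mpr hqP
      rcases hle.lt_or_eq with hlt | heq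
      · refine four_chain hdim3 ((Ideal.span_singleton_prime hq.ne_zero).mpr hq) h0 h1 h2
          ?_ hlt l01 l12
        rw [bot_lt_iff_ne_bot, Ne, Ideal.span_singleton_eq_bot]
        exact hq.ne_zero
      · exact shared_contra R D hD hln A hA m hm P₀ P₁ P₂ h0 h1 h2 l01 l12 hJ (Or.inr hm0)
  · obtain ⟨x, hxm, hx0⟩ := Submodule.exists_mem_ne_zero_of_ne_bot hm0
    have hxP0 : (x : R) ∈ P₀ := hJ (Ideal.mem_map_of_mem _ hxm)
    have hx0R : (x : R) ≠ 0 := fun h => hx0 (Subtype.ext h)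
    obtain ⟨q, hq, hqP, y, hy⟩ := prime_factor_in h0 hxP0 hx0R
    have hDx : D ((x : R)) = 0 := (hA _).mp (SetLike.coe_mem x)
    have hqA : q ∈ A := by
      rw [hy] at hx0R hDx
      exact (hA q).mpr (fc hln hx0R hDx)
    have hle : Ideal.span {q} ≤ P₀ := (Ideal.span_singleton_le_iff_mem _).mpr hqP
    rcases hle.lt_or_eq with hlt | heq
    · refine four_chain hdim3 ((Ideal.span_singleton_prime hq.ne_zero).mpr hq) h0 h1 h2
        ?_ hlt l01 l12
      rw [bot_lt_iff_ne_bot, Ne, Ideal.span_singleton_eq_bot]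
      exact hq.ne_zero
    · exact shared_contra R D hD hln A hA m hm P₀ P₁ P₂ h0 h1 h2 l01 l12 hJ
        (Or.inl ⟨q, hq, hqA, heq⟩)

end Assemble

/-- **Lemma 2.1** (fibers of the quotient morphism are at most curves): if `R` is a
factorial affine `ℂ`-algebra of dimension 3 with a nonzero locally nilpotent derivation
`D` and invariant subalgebra `A = ker D`, then for every maximal ideal `m` of `A` the
fiber ring `R ⧸ mR` has Krull dimension at most 1. -/
theorem fibers_of_quotient_morphism_are_at_most_curves
    (R : Type*) [CommRing R] [IsDomain R] [Algebra ℂ R]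
    [Algebra.FiniteType ℂ R] [UniqueFactorizationMonoid R]
    (hdim : ringKrullDim R = 3)
    (D : Derivation ℂ R R) (hD : D ≠ 0)
    (hln : ∀ r : R, ∃ n : ℕ, (⇑D)^[n] r = 0)
    (A : Subalgebra ℂ R) (hA : ∀ r : R, r ∈ A ↔ D r = 0) :
    ∀ m : Ideal A, m.IsMaximal →
      ringKrullDim (R ⧸ Ideal.map (algebraMap A R) m) ≤ 1 := by
  intro m hm
  set J := Ideal.map (algebraMap A R) m with hJdef
  have key : ∀ l : LTSeries (PrimeSpectrum (R ⧸ J)), l.length ≤ 1 := by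
    intro l
    by_contra hlen
    push_neg at hlen
    have h2l : 2 ≤ l.length := hlen
    let i0 : Fin (l.length + 1) := ⟨0, by omega⟩
    let i1 : Fin (l.length + 1) := ⟨1, by omega⟩
    let i2 : Fin (l.length + 1) := ⟨2, by omega⟩
    have h01 : l i0 < l i1 := l.strictMono (Fin.mk_lt_mk.mpr (by omega))
    have h12 : l i1 < l i2 := l.strictMono (Fin.mk_lt_mk.mpr (by omega))
    haveI hpr0 := (l i0).isPrime
    haveI hpr1 := (l i1).isPrime
    haveI hpr2 := (l i2).isPrime
    set mk : R →+* R ⧸ J := Ideal.Quotient.mk J with hmk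
    set P₀ := Ideal.comap mk (l i0).asIdeal with hP₀
    set P₁ := Ideal.comap mk (l i1).asIdeal with hP₁
    set P₂ := Ideal.comap mk (l i2).asIdeal with hP₂
    have hinj := Ideal.comap_injective_of_surjective mk Ideal.Quotient.mk_surjective
    have hlt01 : P₀ < P₁ := by
      refine lt_of_le_of_ne (Ideal.comap_mono h01.le) fun h => ?_
      exact (ne_of_lt h01) (PrimeSpectrum.ext (hinj h))
    have hlt12 : P₁ < P₂ := by
      refine lt_of_le_of_ne (Ideal.comap_mono h12.le) fun h => ?_
      exact (ne_of_lt h12) (PrimeSpectrum.ext (hinj h))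
    have hJle : J ≤ P₀ := by
      intro z hz
      have : mk z = 0 := Ideal.Quotient.eq_zero_iff_mem.mpr hz
      rw [hP₀, Ideal.mem_comap, this]
      exact Ideal.zero_mem _
    exact no_chain R hdim.le D hD hln A hA m hm P₀ P₁ P₂
      (Ideal.IsPrime.comap mk) (Ideal.IsPrime.comap mk) (Ideal.IsPrime.comap mk)
      hlt01 hlt12 hJle
  show Order.krullDim (PrimeSpectrum (R ⧸ J)) ≤ 1
  refine iSup_le fun l => ?_
  have := key l
  exact_mod_cast this
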